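/- Let n ≥ 1, let C be a real n×n matrix, b ∈ ℝⁿ a column vector, c a row vector in ℝⁿ, and β ∈ ℝ. Let Ω, Ω̃ ⊆ ℝⁿ be open, let u : Ω → ℝ and ũ : Ω̃ → ℝ be C² functions, and let φ : Ω → Ω̃, φ(x) = Cx + b·u(x), satisfy ũ(φ(x)) = c·x + β u(x) for all x ∈ Ω. For x ∈ Ω set M(x) = C + b·(∇u(x)) (outer product of the column b with the row gradient ∇u(x)) and assume M(x) is invertible for every x ∈ Ω. Then for all x ∈ Ω: (i) ∇ũ(φ(x)) = (c + β ∇u(x)) M(x)⁻¹; (ii) M(x)ᵀ · Hũ(φ(x)) · M(x) = κ(x) · Hu(x), where Hu and Hũ denote the Hessian matrices of u and ũ and κ(x) = β − ∇ũ(φ(x))·b; (iii) consequently, if κ(x) ≠ 0, then for any symmetric real n×n matrix F one has tr(F · Hu(x)) = 0 if and only if tr( M(x) F M(x)ᵀ · Hũ(φ(x)) ) = 0. -/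

import Mathlib

open Matrix

/-- Partial derivative of `f : ℝⁿ → ℝ` in the `i`-th coordinate direction. -/
noncomputable def pd {n : ℕ} (i : Fin n) (f : (Fin n → ℝ) → ℝ) (x : Fin n → ℝ) : ℝ :=
  fderiv ℝ f x (Pi.single i 1)

/-- Form-invariance of the class of equations `tr(F(∇u)·Hess u) = 0` under the linear
point transformations `x̃ = Cx + bu`, `ũ = cx + βu`: the gradient transforms
projectively, the Hessian transforms by congruence with `M = C + b∇u` and factor
`κ = β − ∇ũ·b`, and for `κ ≠ 0` the equation `tr(F·Hess u) = 0` is equivalent to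
`tr(M F Mᵀ · Hess ũ) = 0`. -/
theorem equivalence_group_form_invariance
    {n : ℕ} (hn : 1 ≤ n)
    (C : Matrix (Fin n) (Fin n) ℝ) (b c : Fin n → ℝ) (β : ℝ)
    (Ω Ω' : Set (Fin n → ℝ)) (hΩ : IsOpen Ω) (hΩ' : IsOpen Ω')
    (u v : (Fin n → ℝ) → ℝ)
    (hu : ContDiffOn ℝ 2 u Ω) (hv : ContDiffOn ℝ 2 v Ω')
    (φ : (Fin n → ℝ) → (Fin n → ℝ))
    (hφ : ∀ x, φ x = C *ᵥ x + u x • b)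
    (hmap : ∀ x ∈ Ω, φ x ∈ Ω')
    (hrel : ∀ x ∈ Ω, v (φ x) = c ⬝ᵥ x + β * u x)
    (M : (Fin n → ℝ) → Matrix (Fin n) (Fin n) ℝ)
    (hM : ∀ x, M x = C + Matrix.vecMulVec b (fun i => pd i u x))
    (hMinv : ∀ x ∈ Ω, IsUnit (M x).det) :
    ∀ x ∈ Ω,
      ((fun i => pd i v (φ x)) = (c + β • (fun i => pd i u x)) ᵥ* (M x)⁻¹) ∧
      ((M x)ᵀ * Matrix.of (fun i j => pd i (pd j v) (φ x)) * M x
          = (β - (fun i => pd i v (φ x)) ⬝ᵥ b) • Matrix.of (fun i j => pd i (pd j u) x)) ∧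
      (β - (fun i => pd i v (φ x)) ⬝ᵥ b ≠ 0 →
        ∀ F : Matrix (Fin n) (Fin n) ℝ, F.IsSymm →
          (Matrix.trace (F * Matrix.of (fun i j => pd i (pd j u) x)) = 0 ↔
            Matrix.trace (M x * F * (M x)ᵀ
              * Matrix.of (fun i j => pd i (pd j v) (φ x))) = 0)) := by
  classical
  -- evaluation of a continuous linear functional via partials
  have key : ∀ (f : (Fin n → ℝ) →L[ℝ] ℝ) (h : Fin n → ℝ),
      f h = ∑ i, h i * f (Pi.single i 1) := by
    intro f h
    have h1 : h = ∑ i, h i • (Pi.single i 1 : Fin n → ℝ) := by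
      funext j; simp [Finset.sum_apply, Pi.single_apply]
    conv_lhs => rw [h1]
    rw [map_sum]; simp
  -- the derivative of φ
  set Lφ : (Fin n → ℝ) → ((Fin n → ℝ) →L[ℝ] (Fin n → ℝ)) := fun z =>
    LinearMap.toContinuousLinearMap (Matrix.mulVecLin C) + (fderiv ℝ u z).smulRight b with hLφ
  have hdu : ∀ z ∈ Ω, DifferentiableAt ℝ u z := fun z hz =>
    (hu.contDiffAt (hΩ.mem_nhds hz)).differentiableAt two_ne_zero
  have hφD : ∀ z ∈ Ω, HasFDerivAt φ (Lφ z) z := by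
    intro z hz
    have h1 : HasFDerivAt (fun y => C *ᵥ y)
        (LinearMap.toContinuousLinearMap (Matrix.mulVecLin C)) z :=
      (LinearMap.toContinuousLinearMap (Matrix.mulVecLin C)).hasFDerivAt
    have h2 : HasFDerivAt (fun y => u y • b) ((fderiv ℝ u z).smulRight b) z :=
      ((hdu z hz).hasFDerivAt).smul_const b
    have h3 := h1.add h2
    have hfe : φ = fun y => C *ᵥ y + u y • b := funext hφ
    rw [hfe]; exact h3
  have hLφe : ∀ z k, Lφ z (Pi.single k 1) = fun l => M z l k := by
    intro z k
    funext l
    simp only [hLφ, ContinuousLinearMap.add_apply, ContinuousLinearMap.smulRight_apply,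
      LinearMap.coe_toContinuousLinearMap', Matrix.mulVecLin_apply, hM, Matrix.add_apply,
      Matrix.vecMulVec_apply, Pi.add_apply, Pi.smul_apply, smul_eq_mul]
    rw [Matrix.mulVec_single_one]
    have : fderiv ℝ u z (Pi.single k 1) = pd k u z := rfl
    rw [this]
    simp [Matrix.transpose_apply, mul_comm]
  -- the dot-product linear map
  obtain ⟨Lc, hLc⟩ : ∃ L : (Fin n → ℝ) →L[ℝ] ℝ, ∀ y, L y = c ⬝ᵥ y := by
    refine ⟨∑ i, c i • ContinuousLinearMap.proj i, fun y => ?_⟩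
    simp [dotProduct, ContinuousLinearMap.sum_apply]
  -- first-order identity, valid on all of Ω
  have step1 : ∀ z ∈ Ω, ∀ j, (∑ i, M z i j * pd i v (φ z)) = c j + β * pd j u z := by
    intro z hz j
    have hdv : DifferentiableAt ℝ v (φ z) :=
      (hv.contDiffAt (hΩ'.mem_nhds (hmap z hz))).differentiableAt two_ne_zero
    have hvφ : HasFDerivAt (v ∘ φ) ((fderiv ℝ v (φ z)).comp (Lφ z)) z :=
      (hdv.hasFDerivAt).comp z (hφD z hz)
    have hRc : HasFDerivAt (fun y => c ⬝ᵥ y) Lc z := by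
      have := Lc.hasFDerivAt (x := z)
      have hfe : (fun y => c ⬝ᵥ y) = ⇑Lc := by funext y; rw [hLc]
      rw [hfe]; exact this
    have hR : HasFDerivAt (fun y => c ⬝ᵥ y + β * u y) (Lc + β • fderiv ℝ u z) z :=
      hRc.add (((hdu z hz).hasFDerivAt).const_mul β)
    have heq : (v ∘ φ) =ᶠ[nhds z] (fun y => c ⬝ᵥ y + β * u y) :=
      Filter.eventuallyEq_of_mem (hΩ.mem_nhds hz) (fun y hy => hrel y hy)
    have hL : HasFDerivAt (v ∘ φ) (Lc + β • fderiv ℝ u z) z :=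
      hR.congr_of_eventuallyEq heq
    have huniq := hvφ.unique hL
    have hj := congrArg (fun (L : (Fin n → ℝ) →L[ℝ] ℝ) => L (Pi.single j 1)) huniq
    simp only [ContinuousLinearMap.comp_apply, ContinuousLinearMap.add_apply,
      ContinuousLinearMap.smul_apply, smul_eq_mul] at hj
    rw [hLφe z j, key (fderiv ℝ v (φ z)) (fun l => M z l j), hLc] at hj
    have hpd : fderiv ℝ u z (Pi.single j 1) = pd j u z := rfl
    rw [hpd] at hj
    simp only [Pi.single_apply, dotProduct, mul_ite, mul_one, mul_zero,
      Finset.sum_ite_eq', Finset.mem_univ, if_true] at hj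
    exact hj
  intro x hx
  -- Part (i)
  have hvecMul : (fun i => pd i v (φ x)) ᵥ* M x = c + β • (fun i => pd i u x) := by
    funext j
    simp only [Matrix.vecMul, dotProduct, Pi.add_apply, Pi.smul_apply, smul_eq_mul]
    calc ∑ i, pd i v (φ x) * M x i j = ∑ i, M x i j * pd i v (φ x) :=
          Finset.sum_congr rfl fun i _ => mul_comm _ _
      _ = c j + β * pd j u x := step1 x hx j
  have hMM : M x * (M x)⁻¹ = 1 := Matrix.mul_nonsing_inv _ (hMinv x hx)
  have part1 : (fun i => pd i v (φ x)) = (c + β • (fun i => pd i u x)) ᵥ* (M x)⁻¹ := by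
    rw [← hvecMul, Matrix.vecMul_vecMul, hMM, Matrix.vecMul_one]
  -- Part (ii)
  have hvx : ContDiffAt ℝ 2 v (φ x) := hv.contDiffAt (hΩ'.mem_nhds (hmap x hx))
  have hux : ContDiffAt ℝ 2 u x := hu.contDiffAt (hΩ.mem_nhds hx)
  have hv1 : ContDiffAt ℝ 1 (fderiv ℝ v) (φ x) := hvx.fderiv_right (by norm_num)
  have hu1 : ContDiffAt ℝ 1 (fderiv ℝ u) x := hux.fderiv_right (by norm_num)
  have hdvi : ∀ i, DifferentiableAt ℝ (pd i v) (φ x) := fun i =>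
    (hv1.differentiableAt one_ne_zero).clm_apply (differentiableAt_const _)
  have hduj : ∀ j, DifferentiableAt ℝ (pd j u) x := fun j =>
    (hu1.differentiableAt one_ne_zero).clm_apply (differentiableAt_const _)
  have hA : ∀ i, HasFDerivAt (fun z => pd i v (φ z))
      ((fderiv ℝ (pd i v) (φ x)).comp (Lφ x)) x := fun i =>
    ((hdvi i).hasFDerivAt).comp x (hφD x hx)
  have hMd : ∀ i j, HasFDerivAt (fun z => M z i j)
      ((b i) • fderiv ℝ (pd j u) x) x := by
    intro i j
    have hfe : (fun z => M z i j) = fun z => C i j + b i * pd j u z := by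
      funext z; rw [hM]; simp [Matrix.vecMulVec_apply]
    rw [hfe]
    exact (((hduj j).hasFDerivAt).const_mul (b i)).const_add (C i j)
  have hkey : ∀ k j, ∑ i, (M x i j * ∑ l, M x l k * pd l (pd i v) (φ x)
      + pd i v (φ x) * (b i * pd k (pd j u) x)) = β * pd k (pd j u) x := by
    intro k j
    have hsum : HasFDerivAt (fun z => ∑ i, M z i j * pd i v (φ z))
        (∑ i, (M x i j • ((fderiv ℝ (pd i v) (φ x)).comp (Lφ x))
          + pd i v (φ x) • ((b i) • fderiv ℝ (pd j u) x))) x :=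
      HasFDerivAt.fun_sum fun i _ => (hMd i j).mul (hA i)
    have hRj : HasFDerivAt (fun z => c j + β * pd j u z) (β • fderiv ℝ (pd j u) x) x :=
      (((hduj j).hasFDerivAt).const_mul β).const_add (c j)
    have hEj : (fun z => ∑ i, M z i j * pd i v (φ z)) =ᶠ[nhds x]
        (fun z => c j + β * pd j u z) :=
      Filter.eventuallyEq_of_mem (hΩ.mem_nhds hx) (fun z hz => step1 z hz j)
    have deq := hsum.unique (hRj.congr_of_eventuallyEq hEj)
    have hk := congrArg (fun (L : (Fin n → ℝ) →L[ℝ] ℝ) => L (Pi.single k 1)) deq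
    simp only [ContinuousLinearMap.sum_apply, ContinuousLinearMap.add_apply,
      ContinuousLinearMap.smul_apply, ContinuousLinearMap.comp_apply, smul_eq_mul] at hk
    rw [hLφe x k] at hk
    have this2 : ∀ i, (fderiv ℝ (pd i v) (φ x)) (fun l => M x l k)
        = ∑ l, M x l k * pd l (pd i v) (φ x) := fun i => key _ _
    simp only [this2] at hk
    have hpd : fderiv ℝ (pd j u) x (Pi.single k 1) = pd k (pd j u) x := rfl
    rw [hpd] at hk
    exact hk
  have part2 : (M x)ᵀ * Matrix.of (fun i j => pd i (pd j v) (φ x)) * M x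
      = (β - (fun i => pd i v (φ x)) ⬝ᵥ b) • Matrix.of (fun i j => pd i (pd j u) x) := by
    ext k j
    have h1 := hkey k j
    rw [Finset.sum_add_distrib] at h1
    have h2 : ∑ i, pd i v (φ x) * (b i * pd k (pd j u) x)
        = (∑ i, pd i v (φ x) * b i) * pd k (pd j u) x := by
      rw [Finset.sum_mul]; exact Finset.sum_congr rfl fun i _ => (mul_assoc _ _ _).symm
    rw [h2] at h1
    simp only [Matrix.mul_apply, Matrix.transpose_apply, Matrix.smul_apply,
      Matrix.of_apply, smul_eq_mul, dotProduct]
    have h3 : ∑ i, (∑ l, M x l k * pd l (pd i v) (φ x)) * M x i j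
        = ∑ i, M x i j * ∑ l, M x l k * pd l (pd i v) (φ x) :=
      Finset.sum_congr rfl fun i _ => mul_comm _ _
    rw [h3, sub_mul]
    linarith [h1]
  refine ⟨part1, part2, ?_⟩
  intro hκ F hF
  have key3 : Matrix.trace (M x * F * (M x)ᵀ * Matrix.of (fun i j => pd i (pd j v) (φ x)))
      = (β - (fun i => pd i v (φ x)) ⬝ᵥ b)
        * Matrix.trace (F * Matrix.of (fun i j => pd i (pd j u) x)) := by
    have e1 : M x * F * (M x)ᵀ * Matrix.of (fun i j => pd i (pd j v) (φ x))
        = M x * (F * ((M x)ᵀ * Matrix.of (fun i j => pd i (pd j v) (φ x)))) := by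
      simp only [Matrix.mul_assoc]
    rw [e1, Matrix.trace_mul_comm]
    have e2 : F * ((M x)ᵀ * Matrix.of (fun i j => pd i (pd j v) (φ x))) * M x
        = F * ((M x)ᵀ * Matrix.of (fun i j => pd i (pd j v) (φ x)) * M x) := by
      simp only [Matrix.mul_assoc]
    rw [e2, part2, Matrix.mul_smul, Matrix.trace_smul, smul_eq_mul]
  rw [key3]
  constructor
  · intro h; rw [h, mul_zero]
  · intro h; exact (mul_eq_zero.mp h).resolve_left hκ
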